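/- Let J be the 1D discrete Schrödinger operator on ℓ²(ℤ) with bounded potential d. If Im(d(n)) → 0 as n → +∞ and there exists m ∈ ℤ with Im(d(m)) ≠ 0 and Im(d(m+1)) ≠ 0, then J has no eigenvalues on the boundary of its numerical range. -/

import Mathlib

open scoped InnerProductSpace ComplexConjugate

/-- The action of the 1D discrete Schrödinger operator
`(J u)(n) = u(n−1) + d(n) u(n) + u(n+1)`. -/
noncomputable def Jact1 (d : ℤ → ℂ) (u : ℤ → ℂ) (n : ℤ) : ℂ :=
  u (n - 1) + d n * u n + u (n + 1)

/-- The numerical range of the 1D operator `J`. -/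
noncomputable def numRangeJ1 (d : ℤ → ℂ) : Set ℂ :=
  {z | ∃ u v : lp (fun _ : ℤ => ℂ) 2, ‖u‖ = 1 ∧
    (∀ n, v n = Jact1 d (fun m => u m) n) ∧ ⟪u, v⟫_ℂ = z}

lemma jprop (d : ℤ → ℂ) (lam : ℂ) (u : ℤ → ℂ)
    (heig : ∀ n, Jact1 d u n = lam * u n) (n0 : ℤ)
    (h0 : u n0 = 0) (h1 : u (n0 + 1) = 0) : ∀ n, u n = 0 := by
  have hup : ∀ k : ℕ, u (n0 + k) = 0 ∧ u (n0 + k + 1) = 0 := by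
    intro k
    induction k with
    | zero => simpa using ⟨h0, h1⟩
    | succ k ih =>
      obtain ⟨ha, hb⟩ := ih
      have he := heig (n0 + k + 1)
      rw [Jact1, show n0 + (k : ℤ) + 1 - 1 = n0 + k by ring, ha, hb] at he
      have hc : u (n0 + (k : ℤ) + 1 + 1) = 0 := by simpa using he
      constructor
      · rw [show n0 + ((k : ℕ) + 1 : ℕ) = n0 + (k : ℤ) + 1 by push_cast; ring]
        exact hb
      · rw [show n0 + ((k : ℕ) + 1 : ℕ) + 1 = n0 + (k : ℤ) + 1 + 1 by push_cast; ring]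
        exact hc
  have hdn : ∀ k : ℕ, u (n0 - k) = 0 ∧ u (n0 - k + 1) = 0 := by
    intro k
    induction k with
    | zero => simpa using ⟨h0, h1⟩
    | succ k ih =>
      obtain ⟨ha, hb⟩ := ih
      have he := heig (n0 - k)
      rw [Jact1, ha, hb] at he
      have hc : u (n0 - (k : ℤ) - 1) = 0 := by simpa using he
      constructor
      · rw [show n0 - ((k : ℕ) + 1 : ℕ) = n0 - (k : ℤ) - 1 by push_cast; ring]
        exact hc
      · rw [show n0 - ((k : ℕ) + 1 : ℕ) + 1 = n0 - (k : ℤ) by push_cast; ring]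
        exact ha
  intro n
  rcases le_or_gt n0 n with h | h
  · obtain ⟨k, hk⟩ : ∃ k : ℕ, n = n0 + k := ⟨(n - n0).toNat, by omega⟩
    rw [hk]; exact (hup k).1
  · obtain ⟨k, hk⟩ : ∃ k : ℕ, n = n0 - k := ⟨(n0 - n).toNat, by omega⟩
    rw [hk]; exact (hdn k).1

lemma lp_single_apply' (i j : ℤ) (c : ℂ) :
    (lp.single 2 i c : lp (fun _ : ℤ => ℂ) 2) j = if j = i then c else 0 := by
  rcases eq_or_ne j i with h | h
  · subst h; simp [lp.single_apply_self]
  · simp [lp.single_apply_ne _ _ _ h, h]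

lemma inner_single_right' (u : lp (fun _ : ℤ => ℂ) 2) (i : ℤ) (c : ℂ) :
    ⟪u, lp.single 2 i c⟫_ℂ = conj (u i) * c := by
  rw [lp.inner_single_right]
  simp [RCLike.inner_apply]
  ring

lemma inner_single_left' (u : lp (fun _ : ℤ => ℂ) 2) (i : ℤ) (c : ℂ) :
    ⟪(lp.single 2 i c : lp (fun _ : ℤ => ℂ) 2), u⟫_ℂ = conj c * u i := by
  rw [lp.inner_single_left]
  simp [RCLike.inner_apply]
  ring

noncomputable def e' (a : ℂ) (ha : a ≠ 0) : ℂ ≃L[ℝ] ℂ :=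
  ((LinearEquiv.smulOfNeZero ℂ ℂ a ha).restrictScalars ℝ).toContinuousLinearEquiv

set_option maxHeartbeats 1000000 in
lemma keylem (d : ℤ → ℂ) (lam : ℂ) (u : lp (fun _ : ℤ => ℂ) 2) (hu1 : ‖u‖ = 1)
    (heig : ∀ n, Jact1 d (fun k => u k) n = lam * u n)
    (hfr : lam ∈ frontier (numRangeJ1 d)) (n : ℤ) :
    conj (u (n - 1)) + d n * conj (u n) + conj (u (n + 1)) = lam * conj (u n) := by
  by_contra hne
  set w : lp (fun _ : ℤ => ℂ) 2 := lp.single 2 n 1 with hw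
  set v1 : lp (fun _ : ℤ => ℂ) 2 :=
    lp.single 2 (n - 1) 1 + d n • lp.single 2 n 1 + lp.single 2 (n + 1) 1 with hv1def
  set P : ℂ := ⟪u, v1⟫_ℂ with hPdef
  set S : ℂ := ⟪u, w⟫_ℂ with hSdef
  set Q : ℂ := ⟪w, u⟫_ℂ with hQdef
  set R : ℂ := ⟪w, v1⟫_ℂ with hRdef
  have hP : P = conj (u (n - 1)) + d n * conj (u n) + conj (u (n + 1)) := by
    rw [hPdef, hv1def, inner_add_right, inner_add_right, inner_smul_right,
      inner_single_right', inner_single_right', inner_single_right']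
    ring
  have hS : S = conj (u n) := by rw [hSdef, hw, inner_single_right']; ring
  have ha : P - lam * S ≠ 0 := by
    rw [hP, hS]
    intro h
    exact hne (by linear_combination h)
  -- pointwise identity for v1
  have hv1 : ∀ k, (v1 : ∀ _ : ℤ, ℂ) k = Jact1 d (fun m => w m) k := by
    intro k
    have h1 : (k - 1 = n) ↔ (k = n + 1) := by omega
    have h2 : (k + 1 = n) ↔ (k = n - 1) := by omega
    simp only [hv1def, lp.coeFn_add, Pi.add_apply, lp.coeFn_smul, Pi.smul_apply,
      lp_single_apply', Jact1, smul_eq_mul, hw, h1, h2]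
    rcases eq_or_ne k n with rfl | hk
    · simp [show ¬(k = k + 1) by omega, show ¬(k = k - 1) by omega]
    · simp only [if_neg hk, mul_zero]
      ring
  -- inner products of w
  have hww : ⟪w, w⟫_ℂ = 1 := by rw [hw, inner_single_right']; simp [lp_single_apply']
  have hwnorm : ‖w‖ = 1 := by
    have := inner_self_eq_norm_sq_to_K (𝕜 := ℂ) w
    rw [hww] at this
    have h2 : ((‖w‖ : ℝ) : ℂ) ^ 2 = 1 := this.symm
    have : (‖w‖ : ℝ) ^ 2 = 1 := by exact_mod_cast h2
    nlinarith [norm_nonneg w]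
  have huu : ⟪u, u⟫_ℂ = 1 := by
    rw [inner_self_eq_norm_sq_to_K, hu1]; norm_num
  -- values of the quadratic forms
  have hMval : ∀ t : ℂ, ⟪u + t • w, u + t • w⟫_ℂ = 1 + t * S + conj t * Q + conj t * t := by
    intro t
    rw [inner_add_left, inner_add_right, inner_add_right, inner_smul_left, inner_smul_left,
      inner_smul_right, inner_smul_right, huu, hww, ← hSdef, ← hQdef]
    ring
  have hNval : ∀ t : ℂ,
      ⟪u + t • w, lam • u + t • v1⟫_ℂ = lam + t * P + conj t * (lam * Q) + conj t * t * R := by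
    intro t
    rw [inner_add_left, inner_add_right, inner_add_right, inner_smul_left, inner_smul_left,
      inner_smul_right, inner_smul_right, inner_smul_right, inner_smul_right, huu,
      ← hPdef, ← hQdef, ← hRdef]
    ring
  -- the function f and its strict derivative
  have hconj : HasStrictFDerivAt (fun t : ℂ => conj t) (Complex.conjCLE : ℂ →L[ℝ] ℂ) 0 :=
    (Complex.conjCLE : ℂ →L[ℝ] ℂ).hasStrictFDerivAt
  set f : ℂ → ℂ := fun t =>
    (lam + t * P + conj t * (lam * Q) + conj t * t * R) *
      (1 + t * S + conj t * Q + conj t * t)⁻¹ with hfdef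
  have hf : HasStrictFDerivAt f (e' (P - lam * S) ha : ℂ →L[ℝ] ℂ) 0 := by
    have hN : HasStrictFDerivAt
        (fun t : ℂ => lam + t * P + conj t * (lam * Q) + conj t * t * R) _ 0 :=
      (((hasStrictFDerivAt_const lam 0).add ((hasStrictFDerivAt_id (0:ℂ)).mul_const P)).add
        (hconj.mul_const (lam * Q))).add ((hconj.mul (hasStrictFDerivAt_id 0)).mul_const R)
    have hM : HasStrictFDerivAt (fun t : ℂ => 1 + t * S + conj t * Q + conj t * t) _ 0 :=
      (((hasStrictFDerivAt_const (1:ℂ) 0).add ((hasStrictFDerivAt_id (0:ℂ)).mul_const S)).add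
        (hconj.mul_const Q)).add (hconj.mul (hasStrictFDerivAt_id 0))
    have h10 : (1 + (0:ℂ) * S + conj (0:ℂ) * Q + conj (0:ℂ) * (0:ℂ)) ≠ 0 := by simp
    have hMinv := (hasStrictFDerivAt_inv' (𝕜 := ℝ) h10).comp (0:ℂ) hM
    have hfull := hN.mul hMinv
    refine hfull.congr_fderiv ?_
    ext x
    simp [e', LinearEquiv.smulOfNeZero, LinearEquiv.smulOfUnit, smul_eq_mul,
      ContinuousLinearMap.mulLeftRight_apply]
    ring
  have hmap := hf.map_nhds_eq_of_equiv
  have hf0 : f 0 = lam := by simp [hfdef]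
  -- membership of values in the numerical range
  have hball : ∀ t : ℂ, ‖t‖ < 1 → f t ∈ numRangeJ1 d := by
    intro t ht
    have hx : u + t • w ≠ 0 := by
      intro h
      have h1 : u = -(t • w) := eq_neg_of_add_eq_zero_left h
      have h2 : ‖u‖ = ‖t • w‖ := by rw [h1, norm_neg]
      rw [hu1, norm_smul, hwnorm, mul_one] at h2
      exact absurd h2.symm (ne_of_lt ht)
    have hxn : ‖u + t • w‖ ≠ 0 := norm_ne_zero_iff.2 hx
    set c : ℂ := ((‖u + t • w‖⁻¹ : ℝ) : ℂ) with hcdef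
    have hcc : conj c = c := Complex.conj_ofReal _
    refine ⟨c • (u + t • w), c • (lam • u + t • v1), ?_, ?_, ?_⟩
    · rw [norm_smul, show ‖c‖ = ‖u + t • w‖⁻¹ by
        simp [hcdef, abs_of_nonneg, inv_nonneg.mpr (norm_nonneg _)]]
      exact inv_mul_cancel₀ hxn
    · intro k
      have h1 := heig k
      rw [Jact1] at h1
      have h2 := hv1 k
      rw [Jact1] at h2
      simp only [lp.coeFn_smul, Pi.smul_apply, lp.coeFn_add, Pi.add_apply, smul_eq_mul, Jact1]
      linear_combination c * t * h2 - c * h1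
    · simp only [hfdef]
      rw [inner_smul_left, inner_smul_right, hcc, hNval t]
      have hM2 : (1 + t * S + conj t * Q + conj t * t) = ((‖u + t • w‖ : ℝ) : ℂ) ^ 2 := by
        rw [← hMval t, inner_self_eq_norm_sq_to_K]
        norm_cast
      rw [hM2, hcdef]
      have hne0 : ((‖u + t • w‖ : ℝ) : ℂ) ≠ 0 := by exact_mod_cast hxn
      push_cast
      field_simp
  -- conclude: lam is interior, contradicting frontier
  have hmem : numRangeJ1 d ∈ nhds lam := by
    rw [← hf0, ← hmap]
    exact Filter.mem_map.2 (Filter.mem_of_superset (Metric.ball_mem_nhds 0 one_pos)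
      (fun t ht => hball t (by simpa using ht)))
  exact hfr.2 (mem_interior_iff_mem_nhds.2 hmem)


set_option maxHeartbeats 800000 in
/-- If `Im(d n) → 0` as `n → +∞` and there is an `m` with `Im(d m) ≠ 0` and
`Im(d (m+1)) ≠ 0`, then `J` has no eigenvalue on the boundary of its numerical
range. -/
theorem stmt16 (d : ℤ → ℂ) (hd : ∃ C, ∀ n, ‖d n‖ ≤ C)
    (hlim : Filter.Tendsto (fun n : ℤ => (d n).im) Filter.atTop (nhds 0))
    (m : ℤ) (hm : (d m).im ≠ 0) (hm1 : (d (m + 1)).im ≠ 0) :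
    ¬ ∃ (lam : ℂ) (u : lp (fun _ : ℤ => ℂ) 2), u ≠ 0 ∧
        (∀ n, Jact1 d (fun k => u k) n = lam * u n) ∧
        lam ∈ frontier (numRangeJ1 d) := by
  rintro ⟨lam, u, hu0, heig, hfr⟩
  have hnu : ‖u‖ ≠ 0 := fun h => hu0 (norm_eq_zero.mp h)
  set c : ℂ := ((‖u‖⁻¹ : ℝ) : ℂ) with hcdef
  set u' : lp (fun _ : ℤ => ℂ) 2 := c • u with hu'def
  have hu'1 : ‖u'‖ = 1 := by
    rw [hu'def, norm_smul, show ‖c‖ = ‖u‖⁻¹ by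
      simp [hcdef, abs_of_nonneg, inv_nonneg.mpr (norm_nonneg _)]]
    exact inv_mul_cancel₀ hnu
  have heig' : ∀ n, Jact1 d (fun k => u' k) n = lam * u' n := by
    intro n
    have h1 := heig n
    rw [Jact1] at h1 ⊢
    simp only [hu'def, lp.coeFn_smul, Pi.smul_apply, smul_eq_mul]
    linear_combination c * h1
  have hkey := keylem d lam u' hu'1 heig' hfr
  have hconjeq : ∀ n, (u' : ∀ _ : ℤ, ℂ) (n - 1) + conj (d n) * u' n + u' (n + 1)
      = conj lam * u' n := by
    intro n
    have h := congrArg (starRingEnd ℂ) (hkey n)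
    simpa [map_add, map_mul, Complex.conj_conj] using h
  have him : ∀ n, (((d n).im : ℂ) - (lam.im : ℂ)) * u' n = 0 := by
    intro n
    have h1 := heig' n
    rw [Jact1] at h1
    have h2 := hconjeq n
    have h3 : (d n - conj (d n)) * u' n = (lam - conj lam) * u' n := by
      linear_combination h1 - h2
    rw [Complex.sub_conj, Complex.sub_conj] at h3
    have h4 : (2 * Complex.I) * ((((d n).im : ℂ) - (lam.im : ℂ)) * u' n) = 0 := by
      push_cast at h3 ⊢
      linear_combination h3
    exact (mul_eq_zero.mp h4).resolve_left (by simp [Complex.I_ne_zero])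
  have hcons : ∃ n0 : ℤ, (u' : ∀ _ : ℤ, ℂ) n0 = 0 ∧ (u' : ∀ _ : ℤ, ℂ) (n0 + 1) = 0 := by
    rcases eq_or_ne lam.im 0 with h0 | h0
    · have hz : ∀ k : ℤ, (d k).im ≠ 0 → (u' : ∀ _ : ℤ, ℂ) k = 0 := by
        intro k hk
        have h := him k
        rw [h0] at h
        have hne : ((d k).im : ℂ) - ((0 : ℝ) : ℂ) ≠ 0 := by
          simpa using Complex.ofReal_ne_zero.mpr hk
        exact (mul_eq_zero.mp h).resolve_left hne
      exact ⟨m, hz m hm, hz (m + 1) hm1⟩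
    · have hev : ∀ᶠ n in Filter.atTop, |(d n).im| < |lam.im| := by
        have h := Metric.tendsto_nhds.mp hlim |lam.im| (abs_pos.mpr h0)
        simpa [Real.dist_eq] using h
      obtain ⟨N, hN⟩ := Filter.eventually_atTop.mp hev
      have hz : ∀ k : ℤ, N ≤ k → (u' : ∀ _ : ℤ, ℂ) k = 0 := by
        intro k hk
        have hlt := hN k hk
        have hne : (d k).im ≠ lam.im := by
          intro h
          rw [h] at hlt
          exact absurd hlt (lt_irrefl _)
        have hne2 : ((d k).im : ℂ) - (lam.im : ℂ) ≠ 0 := by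
          rw [sub_ne_zero]
          exact_mod_cast hne
        exact (mul_eq_zero.mp (him k)).resolve_left hne2
      exact ⟨N, hz N le_rfl, hz (N + 1) (by omega)⟩
  obtain ⟨n0, hz0, hz1⟩ := hcons
  have hall := jprop d lam (fun k => u' k) heig' n0 hz0 hz1
  have hzero : u' = 0 := lp.ext (funext fun k => by simpa using hall k)
  rw [hzero, norm_zero] at hu'1
  exact one_ne_zero hu'1.symm
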